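/- The intersection of countably many G*(ℵ₀)-families of RD-submodules of a torsion-free R-module M is again a G*(ℵ₀)-family. -/

import Mathlib

open Cardinal

universe u v

variable {R : Type u} [CommRing R] [IsDomain R]
variable {M : Type v} [AddCommGroup M] [Module R M]

/-- `A` is a relatively divisible (RD) submodule of `M`. -/
def IsRD (A : Submodule R M) : Prop :=
  ∀ (r : R) (m : M), r • m ∈ A → ∃ a ∈ A, r • a = r • m

/-- `A` is relatively divisible within the submodule `N` of `M`. -/
def IsRDWithin (A N : Submodule R M) : Prop :=
  A ≤ N ∧ ∀ (r : R) (m : M), m ∈ N → r • m ∈ A → ∃ a ∈ A, r • a = r • m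

/-- `A` is an RD*-submodule of `M`: RD, and every finite rank submodule of `M ⧸ A`
has a countable rank preimage. -/
def IsRDStar (A : Submodule R M) : Prop :=
  IsRD A ∧ ∀ Q : Submodule R (M ⧸ A), Module.rank R ↥Q < ℵ₀ →
    ∃ C : Submodule R M, Module.rank R ↥C ≤ ℵ₀ ∧ C.map A.mkQ = Q

/-- `A` is an RD*-submodule of the submodule `N` of `M`. -/
def IsRDStarWithin (A N : Submodule R M) : Prop :=
  IsRDWithin A N ∧ ∀ Q : Submodule R (M ⧸ A), Q ≤ N.map A.mkQ →
    Module.rank R ↥Q < ℵ₀ →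
    ∃ C : Submodule R M, C ≤ N ∧ Module.rank R ↥C ≤ ℵ₀ ∧ C.map A.mkQ = Q

/-- `A` is a direct summand of `M`. -/
def IsSummand (A : Submodule R M) : Prop :=
  ∃ P : Submodule R M, A ⊓ P = ⊥ ∧ A ⊔ P = ⊤

/-- `A` is a direct summand of the submodule `N` of `M`. -/
def IsSummandWithin (A N : Submodule R M) : Prop :=
  A ≤ N ∧ ∃ P ≤ N, A ⊓ P = ⊥ ∧ A ⊔ P = N

/-- A G*(ℵ₀)-family of RD-submodules of `M`. -/
def IsGStarFamily (𝒢 : Set (Submodule R M)) : Prop :=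
  (∀ A ∈ 𝒢, IsRD A) ∧ (⊥ : Submodule R M) ∈ 𝒢 ∧ (⊤ : Submodule R M) ∈ 𝒢 ∧
  (∀ c ⊆ 𝒢, IsChain (· ≤ ·) c → c.Nonempty → sSup c ∈ 𝒢) ∧
  ∀ C ∈ 𝒢, ∀ X : Set M, X.Countable →
    ∃ B ∈ 𝒢, C ≤ B ∧ X ⊆ ↑B ∧ Module.rank R ↥(B.map C.mkQ) ≤ ℵ₀

/-- A G*(ℵ₀)-family of RD-submodules of the submodule `N` of `M`. -/
def IsGStarFamilyWithin (𝒢 : Set (Submodule R M)) (N : Submodule R M) : Prop :=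
  (∀ A ∈ 𝒢, IsRDWithin A N) ∧ (⊥ : Submodule R M) ∈ 𝒢 ∧ N ∈ 𝒢 ∧
  (∀ c ⊆ 𝒢, IsChain (· ≤ ·) c → c.Nonempty → sSup c ∈ 𝒢) ∧
  ∀ C ∈ 𝒢, ∀ X : Set M, X ⊆ ↑N → X.Countable →
    ∃ B ∈ 𝒢, C ≤ B ∧ X ⊆ ↑B ∧ Module.rank R ↥(B.map C.mkQ) ≤ ℵ₀

/-- `A` is ultra-balanced in `M`: an RD-submodule that is a direct summand of every
RD-submodule `C` of `M` containing `A` with `C/A` of finite rank. -/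
def IsUltraBalanced (A : Submodule R M) : Prop :=
  IsRD A ∧ ∀ C : Submodule R M, IsRD C → A ≤ C →
    Module.rank R ↥(C.map A.mkQ) < ℵ₀ →
    ∃ D ≤ C, A ⊓ D = ⊥ ∧ A ⊔ D = C

/-- `N` is a direct sum of submodules of countable rank. -/
def DSumCountableRank (R : Type u) [CommRing R] (N : Type v) [AddCommGroup N]
    [Module R N] : Prop :=
  ∃ (ι : Type v) (f : ι → Submodule R N), iSupIndep f ∧
    iSup f = ⊤ ∧ ∀ i, Module.rank R ↥(f i) ≤ ℵ₀

/-- `N` is finitely decomposable: a direct sum of finite rank submodules. -/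
def FinDecomp (R : Type u) [CommRing R] (N : Type v) [AddCommGroup N]
    [Module R N] : Prop :=
  ∃ (ι : Type v) (f : ι → Submodule R N), iSupIndep f ∧
    iSup f = ⊤ ∧ ∀ i, Module.rank R ↥(f i) < ℵ₀

/-- The smallest RD-submodule of `M` containing `Y`. -/
def rdClosure (Y : Set M) : Submodule R M :=
  sInf {N : Submodule R M | IsRD N ∧ Y ⊆ ↑N}


section AuxGStar
open Submodule

lemma IsRD.mem_of_smul [NoZeroSMulDivisors R M] {A : Submodule R M} (hA : IsRD A) {r : R}
    (hr : r ≠ 0) {m : M} (hm : r • m ∈ A) : m ∈ A := by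
  obtain ⟨a, ha, hra⟩ := hA r m hm
  exact (smul_right_injective M hr hra) ▸ ha

lemma exists_countable_witness (C B : Submodule R M)
    (hrank : Module.rank R ↥(B.map C.mkQ) ≤ ℵ₀) :
    ∃ T : Set M, T.Countable ∧ T ⊆ ↑B ∧
      ∀ b ∈ B, ∃ r : R, r ≠ 0 ∧ r • b ∈ C ⊔ Submodule.span R T := by
  classical
  set Q := B.map C.mkQ with hQ
  obtain ⟨I, hInd, hI⟩ := exists_maximal_linearIndepOn R ((↑) : ↥Q → M ⧸ C)
  -- every q in Q is torsion over span of I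
  have hall : ∀ q : ↥Q, ∃ a : R, a ≠ 0 ∧ a • (q : M ⧸ C) ∈ span R (((↑) : ↥Q → M ⧸ C) '' I) := by
    intro q
    by_cases hq : q ∈ I
    · exact ⟨1, one_ne_zero, by
        simpa using subset_span (Set.mem_image_of_mem _ hq)⟩
    · exact hI q hq
  -- I is countable
  have hIc : I.Countable := by
    have h1 : LinearIndependent R (fun x : I => (x : ↥Q)) := by
      apply LinearIndependent.of_comp (Q.subtype)
      exact hInd
    have := h1.cardinal_le_rank
    rw [← Set.countable_coe_iff]
    exact Cardinal.mk_le_aleph0_iff.mp (this.trans hrank)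
  -- choose preimages
  have hpre : ∀ q : ↥Q, ∃ b, b ∈ B ∧ C.mkQ b = (q : M ⧸ C) := by
    rintro ⟨q, hq⟩
    obtain ⟨b, hb, hbq⟩ := hq
    exact ⟨b, hb, hbq⟩
  choose pre hpreB hpremk using hpre
  refine ⟨pre '' I, hIc.image _, ?_, ?_⟩
  · rintro t ⟨q, _, rfl⟩; exact hpreB q
  · intro b hb
    set q : ↥Q := ⟨C.mkQ b, Submodule.mem_map_of_mem hb⟩ with hq
    obtain ⟨a, ha, haq⟩ := hall q
    refine ⟨a, ha, ?_⟩
    have himg : ((↑) : ↥Q → M ⧸ C) '' I ⊆ C.mkQ '' (pre '' I) := by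
      rintro x ⟨y, hy, rfl⟩
      exact ⟨pre y, Set.mem_image_of_mem _ hy, hpremk y⟩
    have h2 : a • (q : M ⧸ C) ∈ span R (C.mkQ '' (pre '' I)) :=
      span_mono himg haq
    rw [Submodule.span_image] at h2
    obtain ⟨y, hy, hyeq⟩ := h2
    have hc : a • b - y ∈ C := by
      rw [← Submodule.Quotient.mk_eq_zero]
      have h3 : C.mkQ (a • b - y) = 0 := by
        rw [map_sub, map_smul, hyeq]; simp [hq]
      exact h3
    have hab : a • b = (a • b - y) + y := by abel
    rw [hab]
    exact Submodule.add_mem_sup hc hy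

lemma rank_le_of_torsion_over (C B : Submodule R M) (S : Set M) (hS : S.Countable)
    (hB : ∀ b ∈ B, ∃ r : R, r ≠ 0 ∧ r • b ∈ C ⊔ span R S) :
    Module.rank R ↥(B.map C.mkQ) ≤ ℵ₀ := by
  classical
  rw [Module.rank_def]
  apply ciSup_le'
  rintro ⟨s, hs⟩
  show #s ≤ ℵ₀
  let Q := B.map C.mkQ
  let P := (span R S).map C.mkQ
  have hpre : ∀ x : s, ∃ b, b ∈ B ∧ C.mkQ b = ((x : ↥Q) : M ⧸ C) := by
    rintro ⟨⟨q, hq⟩, hx⟩; obtain ⟨b, hb, rfl⟩ := hq; exact ⟨b, hb, rfl⟩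
  choose pre hpreB hpremk using hpre
  have hr : ∀ x : s, ∃ r : R, r ≠ 0 ∧ r • pre x ∈ C ⊔ span R S := fun x => hB _ (hpreB x)
  choose r hr0 hrmem using hr
  have hwP : ∀ x : s, r x • ((x : ↥Q) : M ⧸ C) ∈ P := by
    intro x
    rw [← hpremk x, ← map_smul]
    obtain ⟨c, hc, y, hy, hcy⟩ := Submodule.mem_sup.mp (hrmem x)
    rw [← hcy]
    have h4 : C.mkQ (c + y) = C.mkQ y := by
      simp [map_add, (Submodule.Quotient.mk_eq_zero C).mpr hc]
    rw [h4]
    exact Submodule.mem_map_of_mem hy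
  let w : s → ↥P := fun x => ⟨r x • ((x : ↥Q) : M ⧸ C), hwP x⟩
  have h0 : LinearIndependent R (fun x : s => ((x : ↥Q) : M ⧸ C)) := by
    simpa [Function.comp_def] using hs.map' Q.subtype (Submodule.ker_subtype Q)
  have hw : LinearIndependent R w := by
    apply LinearIndependent.of_comp P.subtype
    rw [linearIndependent_iff']
    intro t g hsum i hi
    have hsum' : ∑ j ∈ t, (g j * r j) • ((j : ↥Q) : M ⧸ C) = 0 := by
      rw [← hsum]
      apply Finset.sum_congr rfl
      intro j _
      simp [w, smul_smul]
    have := linearIndependent_iff'.mp h0 t (fun j => g j * r j) hsum' i hi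
    exact (mul_eq_zero.mp this).resolve_right (hr0 i)
  refine hw.cardinal_le_rank.trans ?_
  have hPs : P = span R (⇑C.mkQ '' S) := by rw [Submodule.span_image]
  rw [hPs]
  refine (rank_span_le _).trans ?_
  exact Cardinal.mk_image_le.trans (Cardinal.mk_le_aleph0_iff.mpr hS.to_subtype)

lemma key_step [NoZeroSMulDivisors R M] {ι : Type} [Countable ι] [Nonempty ι]
    (fam : ι → Set (Submodule R M)) (h : ∀ i, IsGStarFamily (fam i))
    (C : Submodule R M) (hC : ∀ i, C ∈ fam i) (X : Set M) (hX : X.Countable) :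
    ∃ B, (∀ i, B ∈ fam i) ∧ C ≤ B ∧ X ⊆ ↑B ∧ Module.rank R ↥(B.map C.mkQ) ≤ ℵ₀ := by
  classical
  obtain ⟨f, hf⟩ := exists_surjective_nat ι
  let idx : ℕ → ι := fun n => f (Nat.unpair n).1
  have hidx : ∀ (i : ι) (n : ℕ), ∃ m, n ≤ m ∧ idx m = i := by
    intro i n
    obtain ⟨k, hk⟩ := hf i
    exact ⟨Nat.pair k n, Nat.right_le_pair k n, by simp [idx, Nat.unpair_pair, hk]⟩
  have hG3 : ∀ (S : Set M) (n : ℕ), ∃ B : Submodule R M, S.Countable →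
      (B ∈ fam (idx n) ∧ C ≤ B ∧ S ⊆ ↑B ∧ Module.rank R ↥(B.map C.mkQ) ≤ ℵ₀) := by
    intro S n
    by_cases hS : S.Countable
    · obtain ⟨B, hB1, hB2, hB3, hB4⟩ := (h (idx n)).2.2.2.2 C (hC _) S hS
      exact ⟨B, fun _ => ⟨hB1, hB2, hB3, hB4⟩⟩
    · exact ⟨⊥, fun hS' => absurd hS' hS⟩
  choose Bf hBf using hG3
  have hTex : ∀ B : Submodule R M, ∃ T : Set M, Module.rank R ↥(B.map C.mkQ) ≤ ℵ₀ →
      (T.Countable ∧ T ⊆ ↑B ∧ ∀ b ∈ B, ∃ r : R, r ≠ 0 ∧ r • b ∈ C ⊔ span R T) := by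
    intro B
    by_cases hB : Module.rank R ↥(B.map C.mkQ) ≤ ℵ₀
    · obtain ⟨T, h1, h2, h3⟩ := exists_countable_witness C B hB
      exact ⟨T, fun _ => ⟨h1, h2, h3⟩⟩
    · exact ⟨∅, fun hB' => absurd hB' hB⟩
  choose Tf hTf using hTex
  let S : ℕ → Set M := fun n => Nat.rec X (fun m Sm => Sm ∪ Tf (Bf Sm m)) n
  have hSsucc : ∀ n, S (n + 1) = S n ∪ Tf (Bf (S n) n) := fun n => rfl
  have hSc : ∀ n, (S n).Countable := by
    intro n
    induction n with
    | zero => exact hX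
    | succ n ih =>
      rw [hSsucc]
      exact ih.union ((hTf _ ((hBf (S n) n ih).2.2.2)).1)
  let Bs : ℕ → Submodule R M := fun n => Bf (S n) n
  have hBs : ∀ n, Bs n ∈ fam (idx n) ∧ C ≤ Bs n ∧ S n ⊆ ↑(Bs n) ∧
      Module.rank R ↥((Bs n).map C.mkQ) ≤ ℵ₀ := fun n => hBf (S n) n (hSc n)
  have hTs : ∀ n, (Tf (Bs n)).Countable ∧ Tf (Bs n) ⊆ ↑(Bs n) ∧
      ∀ b ∈ Bs n, ∃ r : R, r ≠ 0 ∧ r • b ∈ C ⊔ span R (Tf (Bs n)) :=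
    fun n => hTf (Bs n) (hBs n).2.2.2
  have hstep : ∀ n, Bs n ≤ Bs (n + 1) := by
    intro n b hb
    obtain ⟨r, hr, hrb⟩ := (hTs n).2.2 b hb
    have hsub : C ⊔ span R (Tf (Bs n)) ≤ Bs (n + 1) := by
      refine sup_le (hBs (n + 1)).2.1 ?_
      rw [span_le]
      refine Set.Subset.trans ?_ (hBs (n + 1)).2.2.1
      rw [hSsucc]
      exact Set.subset_union_right
    exact ((h (idx (n + 1))).1 _ (hBs (n + 1)).1).mem_of_smul hr (hsub hrb)
  have hmono : Monotone Bs := monotone_nat_of_le_succ hstep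
  refine ⟨⨆ n, Bs n, ?_, ?_, ?_, ?_⟩
  · intro i
    obtain ⟨m0, _, hm0⟩ := hidx i 0
    have hsup : sSup (Bs '' {n | idx n = i}) = ⨆ n, Bs n := by
      apply le_antisymm
      · apply sSup_le; rintro x ⟨n, _, rfl⟩; exact le_iSup Bs n
      · apply iSup_le; intro n
        obtain ⟨m, hnm, hmi⟩ := hidx i n
        exact (hmono hnm).trans (le_sSup ⟨m, hmi, rfl⟩)
    rw [← hsup]
    refine (h i).2.2.2.1 _ ?_ ?_ ?_
    · rintro x ⟨n, hn, rfl⟩; exact hn ▸ (hBs n).1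
    · rintro x ⟨n, _, rfl⟩ y ⟨m, _, rfl⟩ _
      exact (le_total n m).imp (fun hh => hmono hh) (fun hh => hmono hh)
    · exact ⟨Bs m0, m0, hm0, rfl⟩
  · exact (hBs 0).2.1.trans (le_iSup Bs 0)
  · intro x hx
    exact (le_iSup Bs 0) ((hBs 0).2.2.1 hx)
  · apply rank_le_of_torsion_over C _ (⋃ n, Tf (Bs n))
      (Set.countable_iUnion fun n => (hTs n).1)
    intro b hb
    obtain ⟨n, hbn⟩ := (Submodule.mem_iSup_of_chain ⟨Bs, hmono⟩ b).mp hb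
    obtain ⟨r, hr, hrb⟩ := (hTs n).2.2 b hbn
    exact ⟨r, hr,
      (sup_le_sup_left (span_mono (Set.subset_iUnion (fun k => Tf (Bs k)) n)) C) hrb⟩

end AuxGStar

/-- The intersection of countably many G*(ℵ₀)-families is a G*(ℵ₀)-family. -/
theorem gStarFamily_iInter [NoZeroSMulDivisors R M] (ι : Type) [Countable ι] [Nonempty ι]
    (fam : ι → Set (Submodule R M)) (h : ∀ i, IsGStarFamily (fam i)) :
    IsGStarFamily (⋂ i, fam i) := by
  have hmem : ∀ A : Submodule R M, A ∈ (⋂ i, fam i) ↔ ∀ i, A ∈ fam i :=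
    fun A => Set.mem_iInter
  refine ⟨?_, ?_, ?_, ?_, ?_⟩
  · intro A hA
    exact (h (Classical.arbitrary ι)).1 A ((hmem A).mp hA _)
  · exact (hmem _).mpr fun i => (h i).2.1
  · exact (hmem _).mpr fun i => (h i).2.2.1
  · intro c hc hchain hne
    exact (hmem _).mpr fun i =>
      (h i).2.2.2.1 c (fun x hx => (hmem x).mp (hc hx) i) hchain hne
  · intro C hCm X hX
    obtain ⟨B, h1, h2, h3, h4⟩ := key_step fam h C (fun i => (hmem C).mp hCm i) X hX
    exact ⟨B, (hmem B).mpr h1, h2, h3, h4⟩
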